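/- Let x^s ∈ ℂ^n, x^s ≠ 0, and define g : ℂ^n → ℝ by g(x) = ‖x‖⁴ − ‖x‖²‖x^s‖² − |⟨x, x^s⟩|² + ‖x^s‖⁴. For all x, h ∈ ℂ^n, the second directional derivative (d²/dt²) g(x + t h) at t = 0 equals Q_x(h) := 2((2‖x‖² − ‖x^s‖²)‖h‖² + 4(Re⟨x,h⟩)² − |⟨x^s,h⟩|²). Moreover: (i) for every h ≠ 0, Q_0(h) ≤ −2‖x^s‖²‖h‖² < 0; (ii) for every x with ⟨x^s, x⟩ = 0 and ‖x‖ = ‖x^s‖/√2, one has Q_x(x^s) = −2‖x^s‖⁴ < 0. In particular, no critical point of g in {0} ∪ { x : ⟨x^s,x⟩ = 0, ‖x‖ = ‖x^s‖/√2 } satisfies the second-order optimality condition Q_x ⪰ 0. -/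

import Mathlib

open scoped ComplexInnerProductSpace

private lemma iter2poly (c0 c1 c2 c3 c4 : ℝ) :
    iteratedDeriv 2 (fun t : ℝ => c0 + c1*t + c2*t^2 + c3*t^3 + c4*t^4) 0 = 2*c2 := by
  have h1 : deriv (fun t : ℝ => c0 + c1*t + c2*t^2 + c3*t^3 + c4*t^4)
      = fun t : ℝ => c1 + 2*c2*t + 3*c3*t^2 + 4*c4*t^3 := by
    funext t
    have : HasDerivAt (fun t : ℝ => c0 + c1*t + c2*t^2 + c3*t^3 + c4*t^4)
        (c1 + 2*c2*t + 3*c3*t^2 + 4*c4*t^3) t := by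
      have h := (((hasDerivAt_const t c0).add (((hasDerivAt_pow 1 t).const_mul c1))).add
        ((hasDerivAt_pow 2 t).const_mul c2)).add
        (((hasDerivAt_pow 3 t).const_mul c3).add ((hasDerivAt_pow 4 t).const_mul c4))
      convert h using 1
      · rfl
      · rfl
      · funext s; simp only [Pi.add_apply]; ring
      · push_cast; ring
    exact this.deriv
  have h2 : deriv (fun t : ℝ => c1 + 2*c2*t + 3*c3*t^2 + 4*c4*t^3) 0 = 2*c2 := by
    have hd : HasDerivAt (fun t : ℝ => c1 + 2*c2*t + 3*c3*t^2 + 4*c4*t^3)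
        (2*c2 + 2*(3*c3)*(0:ℝ)^1 + 3*(4*c4)*(0:ℝ)^2) 0 := by
      have h := ((hasDerivAt_const (0:ℝ) c1).add (((hasDerivAt_pow 1 (0:ℝ)).const_mul (2*c2)))).add
        (((hasDerivAt_pow 2 (0:ℝ)).const_mul (3*c3)).add ((hasDerivAt_pow 3 (0:ℝ)).const_mul (4*c4)))
      convert h using 1
      · rfl
      · rfl
      · funext s; simp only [Pi.add_apply]; ring
      · push_cast; ring
    rw [hd.deriv]; ring
  rw [iteratedDeriv_succ, iteratedDeriv_one, h1, h2]

private lemma abs_sq_add' (a b : ℂ) (t : ℝ) :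
    ‖a + (t:ℂ) * b‖^2
      = ‖a‖^2 + 2*((a * starRingEnd ℂ b).re)*t + ‖b‖^2 * t^2 := by
  simp [Complex.sq_norm, Complex.normSq_apply, Complex.add_re, Complex.add_im,
    Complex.mul_re, Complex.mul_im]
  ring

private lemma norm_exp_aux (n : ℕ) (x h : EuclideanSpace ℂ (Fin n)) (t : ℝ) :
    ‖x + t • h‖^2 = ‖x‖^2 + 2*(inner ℂ x h : ℂ).re * t + ‖h‖^2 * t^2 := by
  rw [@norm_add_sq ℂ, ← algebraMap_smul ℂ t h, Complex.coe_algebraMap,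
    inner_smul_right, norm_smul]
  simp [Complex.mul_re]
  rw [mul_pow, sq_abs]
  ring

private lemma abs_exp_aux (n : ℕ) (x h xs : EuclideanSpace ℂ (Fin n)) (t : ℝ) :
    ‖(inner ℂ (x + t • h) xs : ℂ)‖^2
      = ‖(inner ℂ x xs : ℂ)‖^2
        + 2*(((inner ℂ x xs : ℂ) * (inner ℂ xs h : ℂ)).re) * t
        + ‖(inner ℂ xs h : ℂ)‖^2 * t^2 := by
  rw [inner_add_left, ← algebraMap_smul ℂ t h, Complex.coe_algebraMap,
    inner_smul_left, Complex.conj_ofReal]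
  rw [show ‖(inner ℂ xs h : ℂ)‖ = ‖(inner ℂ h xs : ℂ)‖ by
    rw [← inner_conj_symm xs h, Complex.norm_conj]]
  rw [← inner_conj_symm xs h]
  generalize (inner ℂ x xs : ℂ) = a
  generalize (inner ℂ h xs : ℂ) = b
  exact abs_sq_add' a b t

open scoped ComplexInnerProductSpace in
/-- the Hessian quadratic form of the expected Wirtinger
objective `g(x) = ‖x‖⁴ - ‖x‖²‖x^s‖² - |⟨x,x^s⟩|² + ‖x^s‖⁴`, and the fact that
the non-global critical points `0` and `{⟨x^s,x⟩ = 0, ‖x‖ = ‖x^s‖/√2}` fail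
the second-order optimality condition. -/
theorem hessian_expected_objective (n : ℕ)
    (xs : EuclideanSpace ℂ (Fin n)) (hxs : xs ≠ 0)
    (g : EuclideanSpace ℂ (Fin n) → ℝ)
    (hg : ∀ x, g x = ‖x‖ ^ 4 - ‖x‖ ^ 2 * ‖xs‖ ^ 2
        - ‖(inner ℂ x xs : ℂ)‖ ^ 2 + ‖xs‖ ^ 4)
    (Q : EuclideanSpace ℂ (Fin n) → EuclideanSpace ℂ (Fin n) → ℝ)
    (hQ : ∀ x h, Q x h = 2 * ((2 * ‖x‖ ^ 2 - ‖xs‖ ^ 2) * ‖h‖ ^ 2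
        + 4 * ((inner ℂ x h : ℂ).re) ^ 2 - ‖(inner ℂ xs h : ℂ)‖ ^ 2)) :
    (∀ x h : EuclideanSpace ℂ (Fin n),
        iteratedDeriv 2 (fun t : ℝ => g (x + t • h)) 0 = Q x h) ∧
    (∀ h : EuclideanSpace ℂ (Fin n), h ≠ 0 →
        Q 0 h ≤ -2 * ‖xs‖ ^ 2 * ‖h‖ ^ 2 ∧ Q 0 h < 0) ∧
    (∀ x : EuclideanSpace ℂ (Fin n), (inner ℂ xs x : ℂ) = 0 → ‖x‖ = ‖xs‖ / Real.sqrt 2 →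
        Q x xs = -2 * ‖xs‖ ^ 4 ∧ Q x xs < 0) ∧
    (∀ x : EuclideanSpace ℂ (Fin n),
        (x = 0 ∨ ((inner ℂ xs x : ℂ) = 0 ∧ ‖x‖ = ‖xs‖ / Real.sqrt 2)) →
        ¬(∀ h, 0 ≤ Q x h)) := by
  have hS : 0 < ‖xs‖ := norm_pos_iff.2 hxs
  have hess : ∀ x h : EuclideanSpace ℂ (Fin n),
      iteratedDeriv 2 (fun t : ℝ => g (x + t • h)) 0 = Q x h := by
    intro x h
    have key : (fun t : ℝ => g (x + t • h)) = fun t : ℝ =>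
        (‖x‖^2 * ‖x‖^2 - ‖x‖^2 * ‖xs‖^2 - ‖(inner ℂ x xs : ℂ)‖^2 + ‖xs‖^4)
        + (4*‖x‖^2*(inner ℂ x h : ℂ).re - 2*(inner ℂ x h : ℂ).re*‖xs‖^2
            - 2*((inner ℂ x xs : ℂ) * (inner ℂ xs h : ℂ)).re) * t
        + (4*((inner ℂ x h : ℂ).re)^2 + 2*‖x‖^2*‖h‖^2 - ‖h‖^2*‖xs‖^2
            - ‖(inner ℂ xs h : ℂ)‖^2) * t^2
        + (4*(inner ℂ x h : ℂ).re*‖h‖^2) * t^3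
        + (‖h‖^2*‖h‖^2) * t^4 := by
      funext t
      rw [hg, show ‖x + t • h‖^4 = (‖x + t • h‖^2)^2 by ring,
        norm_exp_aux, abs_exp_aux]
      ring
    rw [key, iter2poly, hQ]
    ring
  have part2 : ∀ h : EuclideanSpace ℂ (Fin n), h ≠ 0 →
      Q 0 h ≤ -2 * ‖xs‖ ^ 2 * ‖h‖ ^ 2 ∧ Q 0 h < 0 := by
    intro h hh
    have hh' : 0 < ‖h‖ := norm_pos_iff.2 hh
    have hF : 0 ≤ ‖(inner ℂ xs h : ℂ)‖ ^ 2 := by positivity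
    rw [hQ]
    simp only [norm_zero, inner_zero_left, Complex.zero_re]
    have hp := mul_pos (pow_pos hS 2) (pow_pos hh' 2)
    constructor
    · nlinarith
    · nlinarith
  have part3 : ∀ x : EuclideanSpace ℂ (Fin n), (inner ℂ xs x : ℂ) = 0 →
      ‖x‖ = ‖xs‖ / Real.sqrt 2 → Q x xs = -2 * ‖xs‖ ^ 4 ∧ Q x xs < 0 := by
    intro x hix hnx
    have hxxs : (inner ℂ x xs : ℂ) = 0 := by
      have h2 := congrArg (starRingEnd ℂ) hix
      rw [inner_conj_symm] at h2
      simpa using h2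
    have hnx2 : ‖x‖^2 = ‖xs‖^2 / 2 := by
      rw [hnx, div_pow, Real.sq_sqrt (by norm_num : (0:ℝ) ≤ 2)]
    have habs : ‖(inner ℂ xs xs : ℂ)‖ = ‖xs‖^2 := by
      rw [@inner_self_eq_norm_sq_to_K ℂ]
      simp [Complex.norm_real]
    have hQv : Q x xs = -2 * ‖xs‖ ^ 4 := by
      rw [hQ, hxxs, habs, hnx2]
      simp
      ring
    exact ⟨hQv, by rw [hQv]; nlinarith [pow_pos hS 4]⟩
  refine ⟨hess, part2, part3, ?_⟩
  rintro x (rfl | ⟨hix, hnx⟩) hall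
  · exact absurd (hall xs) (not_le.2 (part2 xs hxs).2)
  · exact absurd (hall xs) (not_le.2 (part3 x hix hnx).2)
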